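/- (Lemma 3.6, monotonicity of successive differences.) Suppose each step-size satisfies α_i < 2/L_i, and let {(x^k, d^k, z^k)} be generated by the NIDS iteration with d^k ∈ range(I − W) for all k. Then the sequence { ‖z^{k+1} − z^k‖²_{Λ⁻¹} + ‖d^{k+1} − d^k‖²_M }_k is monotonically nonincreasing: for all k, ‖z^{k+1} − z^k‖²_{Λ⁻¹} + ‖d^{k+1} − d^k‖²_M ≤ ‖z^k − z^{k−1}‖²_{Λ⁻¹} + ‖d^k − d^{k−1}‖²_M. -/

import Mathlib

open Matrix Filter Topology

noncomputable section

/-- Trace inner product `⟨x, y⟩ = tr(xᵀ y)` on `n × p` real matrices. -/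
def iprod {n p : ℕ} (x y : Matrix (Fin n) (Fin p) ℝ) : ℝ := (xᵀ * y).trace

/-- Weighted inner product `⟨x, y⟩_Q = tr(xᵀ Q y)`. -/
def iprodQ {n p : ℕ} (Q : Matrix (Fin n) (Fin n) ℝ) (x y : Matrix (Fin n) (Fin p) ℝ) : ℝ :=
  (xᵀ * Q * y).trace

/-- Weighted squared (semi)norm `‖x‖_Q² = tr(xᵀ Q x)`. -/
def nsq {n p : ℕ} (Q : Matrix (Fin n) (Fin n) ℝ) (x : Matrix (Fin n) (Fin p) ℝ) : ℝ :=
  iprodQ Q x x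

/-- `∇s(x)`: the matrix whose `i`-th row is the gradient field `g i` applied to the `i`-th
row of `x`. -/
def gradS {n p : ℕ} (g : Fin n → EuclideanSpace ℝ (Fin p) → EuclideanSpace ℝ (Fin p))
    (x : Matrix (Fin n) (Fin p) ℝ) : Matrix (Fin n) (Fin p) ℝ :=
  Matrix.of fun i => WithLp.equiv 2 (Fin p → ℝ) (g i ((WithLp.equiv 2 (Fin p → ℝ)).symm (x i)))

/-- `x ∈ range(A)`, i.e. `x = A y` for some `y ∈ ℝ^{n×p}`. -/
def InRange {n p : ℕ} (A : Matrix (Fin n) (Fin n) ℝ) (x : Matrix (Fin n) (Fin p) ℝ) : Prop :=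
  ∃ y : Matrix (Fin n) (Fin p) ℝ, x = A * y

/-- `B` is the Moore–Penrose pseudoinverse of `A`. -/
def IsMoorePenrose {n : ℕ} (A B : Matrix (Fin n) (Fin n) ℝ) : Prop :=
  A * B * A = A ∧ B * A * B = B ∧ (A * B)ᵀ = A * B ∧ (B * A)ᵀ = B * A

/-- `r(x) = Σᵢ rᵢ(xᵢ)` where `xᵢ` is the `i`-th row of `x`. -/
def rsum {n p : ℕ} (r : Fin n → (Fin p → ℝ) → ℝ) (x : Matrix (Fin n) (Fin p) ℝ) : ℝ :=
  ∑ i, r i (x i)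

/-- `q ∈ ∂r(x)`: subgradient of `rsum r` at `x` w.r.t. the trace inner product. -/
def IsSubgrad {n p : ℕ} (r : Fin n → (Fin p → ℝ) → ℝ) (x q : Matrix (Fin n) (Fin p) ℝ) : Prop :=
  ∀ y : Matrix (Fin n) (Fin p) ℝ, rsum r x + iprod q (y - x) ≤ rsum r y

/-- `t` is an eigenvalue of the real matrix `A`. -/
def IsEig {n : ℕ} (A : Matrix (Fin n) (Fin n) ℝ) (t : ℝ) : Prop :=
  ∃ v : Fin n → ℝ, v ≠ 0 ∧ A *ᵥ v = t • v

/-- The mixing matrix assumption: symmetry, null space of `I - W` is the span of the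
all-ones vector, and `2I ≽ W + I ≻ 0`. -/
def IsMixing {n : ℕ} (W : Matrix (Fin n) (Fin n) ℝ) : Prop :=
  Wᵀ = W ∧ (∀ v : Fin n → ℝ, (1 - W) *ᵥ v = 0 ↔ ∃ t : ℝ, v = fun _ => t) ∧
    (W + 1).PosDef ∧ ((2 : ℝ) • (1 : Matrix (Fin n) (Fin n) ℝ) - (W + 1)).PosSemidef

/-- `x` is a minimizer over `ℝ^{n×p}` of `u ↦ r(u) + ½‖u − z‖²_{Λ⁻¹}` where `Λ = diag α`. -/
def ProxMin {n p : ℕ} (r : Fin n → (Fin p → ℝ) → ℝ) (α : Fin n → ℝ)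
    (z x : Matrix (Fin n) (Fin p) ℝ) : Prop :=
  ∀ u : Matrix (Fin n) (Fin p) ℝ,
    rsum r x + 1 / 2 * nsq (Matrix.diagonal fun i => (α i)⁻¹) (x - z) ≤
      rsum r u + 1 / 2 * nsq (Matrix.diagonal fun i => (α i)⁻¹) (u - z)

/-- `(d, z)` is a fixed point of the NIDS iteration. -/
def NIDSFixed {n p : ℕ} (W : Matrix (Fin n) (Fin n) ℝ) (α : Fin n → ℝ) (c : ℝ)
    (g : Fin n → EuclideanSpace ℝ (Fin p) → EuclideanSpace ℝ (Fin p))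
    (r : Fin n → (Fin p → ℝ) → ℝ) (d z : Matrix (Fin n) (Fin p) ℝ) : Prop :=
  ∃ x : Matrix (Fin n) (Fin p) ℝ, ProxMin r α z x ∧
    d = d + c • ((1 - W) *
      ((2 : ℝ) • x - z - Matrix.diagonal α * gradS g x - Matrix.diagonal α * d)) ∧
    z = x - Matrix.diagonal α * gradS g x - Matrix.diagonal α * d

end

namespace NIDSAux
variable {n p : ℕ}

lemma ip_comm (x y : Matrix (Fin n) (Fin p) ℝ) : iprod x y = iprod y x := by
  unfold iprod
  rw [← Matrix.trace_transpose, Matrix.transpose_mul, Matrix.transpose_transpose]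

lemma ip_add_left (x y z : Matrix (Fin n) (Fin p) ℝ) :
    iprod (x + y) z = iprod x z + iprod y z := by
  unfold iprod; rw [Matrix.transpose_add, Matrix.add_mul, Matrix.trace_add]

lemma ip_add_right (x y z : Matrix (Fin n) (Fin p) ℝ) :
    iprod x (y + z) = iprod x y + iprod x z := by
  unfold iprod; rw [Matrix.mul_add, Matrix.trace_add]

lemma ip_sub_left (x y z : Matrix (Fin n) (Fin p) ℝ) :
    iprod (x - y) z = iprod x z - iprod y z := by
  unfold iprod; rw [Matrix.transpose_sub, Matrix.sub_mul, Matrix.trace_sub]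

lemma ip_sub_right (x y z : Matrix (Fin n) (Fin p) ℝ) :
    iprod x (y - z) = iprod x y - iprod x z := by
  unfold iprod; rw [Matrix.mul_sub, Matrix.trace_sub]

lemma ip_smul_left (c : ℝ) (x y : Matrix (Fin n) (Fin p) ℝ) :
    iprod (c • x) y = c * iprod x y := by
  unfold iprod; rw [Matrix.transpose_smul, Matrix.smul_mul, Matrix.trace_smul]; rfl

lemma ip_smul_right (c : ℝ) (x y : Matrix (Fin n) (Fin p) ℝ) :
    iprod x (c • y) = c * iprod x y := by
  unfold iprod; rw [Matrix.mul_smul, Matrix.trace_smul]; rfl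

lemma ip_mul_left (Q : Matrix (Fin n) (Fin n) ℝ) (x y : Matrix (Fin n) (Fin p) ℝ) :
    iprod (Q * x) y = iprod x (Qᵀ * y) := by
  unfold iprod
  rw [Matrix.transpose_mul, Matrix.mul_assoc]

lemma iprodQ_eq (Q : Matrix (Fin n) (Fin n) ℝ) (x y : Matrix (Fin n) (Fin p) ℝ) :
    iprodQ Q x y = iprod x (Q * y) := by
  unfold iprodQ iprod; rw [Matrix.mul_assoc]

lemma nsq_eq (Q : Matrix (Fin n) (Fin n) ℝ) (x : Matrix (Fin n) (Fin p) ℝ) :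
    nsq Q x = iprod x (Q * x) := iprodQ_eq Q x x

lemma ipq_comm {Q : Matrix (Fin n) (Fin n) ℝ} (hQ : Qᵀ = Q)
    (x y : Matrix (Fin n) (Fin p) ℝ) : iprod x (Q * y) = iprod y (Q * x) := by
  rw [ip_comm, ip_mul_left, hQ]

/-- nonnegativity of `nsq` for PSD matrices -/
lemma nsq_nonneg {Q : Matrix (Fin n) (Fin n) ℝ} (hQ : Q.PosSemidef)
    (x : Matrix (Fin n) (Fin p) ℝ) : 0 ≤ nsq Q x := by
  unfold nsq iprodQ
  rw [Matrix.trace]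
  refine Finset.sum_nonneg fun j _ => ?_
  have h := hQ.dotProduct_mulVec_nonneg (fun i => x i j)
  simp only [Matrix.diag, Matrix.mul_apply, dotProduct, Matrix.mulVec, Finset.mul_sum,
    Finset.sum_mul, Matrix.transpose_apply, star_trivial] at h ⊢
  rw [Finset.sum_comm]
  refine le_trans h (le_of_eq (Finset.sum_congr rfl fun a _ => Finset.sum_congr rfl fun b _ => ?_))
  ring

lemma qdiff {Q : Matrix (Fin n) (Fin n) ℝ} (hQ : Qᵀ = Q)
    (a b : Matrix (Fin n) (Fin p) ℝ) :
    iprod a (Q * a) - iprod b (Q * b) = iprod (a + b) (Q * (a - b)) := by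
  rw [Matrix.mul_sub, ip_add_left, ip_sub_right, ip_sub_right]
  have := ipq_comm hQ a b
  linarith

/-- the transpose of a Moore-Penrose inverse of a symmetric matrix is itself. -/
lemma mp_symm {A B : Matrix (Fin n) (Fin n) ℝ} (hA : Aᵀ = A)
    (hB : IsMoorePenrose A B) : Bᵀ = B := by
  obtain ⟨h1, h2, h3, h4⟩ := hB
  have c1 : A * Bᵀ * A = A := by
    have t : (A * B * A)ᵀ = A * Bᵀ * A := by
      simp only [Matrix.transpose_mul, hA, Matrix.mul_assoc]
    rw [h1, hA] at t
    exact t.symm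
  have c3 : (A * Bᵀ)ᵀ = A * Bᵀ := by
    have e : A * Bᵀ = (B * A)ᵀ := by simp only [Matrix.transpose_mul, hA]
    rw [e, Matrix.transpose_transpose]
    exact h4.symm
  have c4 : (Bᵀ * A)ᵀ = Bᵀ * A := by
    have e : Bᵀ * A = (A * B)ᵀ := by simp only [Matrix.transpose_mul, hA]
    rw [e, Matrix.transpose_transpose]
    exact h3.symm
  have c2 : Bᵀ * A * Bᵀ = Bᵀ := by
    have t : (B * A * B)ᵀ = Bᵀ * A * Bᵀ := by
      simp only [Matrix.transpose_mul, hA, Matrix.mul_assoc]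
    rw [h2] at t
    exact t.symm
  have hAB : A * B = A * Bᵀ := by
    calc A * B = (A * B)ᵀ := h3.symm
    _ = Bᵀ * Aᵀ := Matrix.transpose_mul _ _
    _ = Bᵀ * (A * Bᵀ * A)ᵀ := by rw [c1]
    _ = (A * B)ᵀ * (A * Bᵀ)ᵀ := by
        simp only [Matrix.transpose_mul, Matrix.transpose_transpose, Matrix.mul_assoc]
    _ = (A * B) * (A * Bᵀ) := by rw [h3, c3]
    _ = (A * B * A) * Bᵀ := by simp only [Matrix.mul_assoc]
    _ = A * Bᵀ := by rw [h1]
  have hBA : B * A = Bᵀ * A := by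
    calc B * A = (B * A)ᵀ := h4.symm
    _ = Aᵀ * Bᵀ := Matrix.transpose_mul _ _
    _ = (A * Bᵀ * A)ᵀ * Bᵀ := by rw [c1]
    _ = (Bᵀ * A)ᵀ * (B * A)ᵀ := by
        simp only [Matrix.transpose_mul, Matrix.transpose_transpose, Matrix.mul_assoc]
    _ = (Bᵀ * A) * (B * A) := by rw [c4, h4]
    _ = Bᵀ * (A * B * A) := by simp only [Matrix.mul_assoc]
    _ = Bᵀ * A := by rw [h1]
  calc Bᵀ = Bᵀ * A * Bᵀ := c2.symm
  _ = (B * A) * Bᵀ := by rw [hBA]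
  _ = B * (A * Bᵀ) := by rw [Matrix.mul_assoc]
  _ = B * (A * B) := by rw [hAB]
  _ = B * A * B := by rw [Matrix.mul_assoc]
  _ = B := h2

/-- The core one-step nonexpansiveness computation. -/
lemma core {n p : ℕ} (W B : Matrix (Fin n) (Fin n) ℝ) (α : Fin n → ℝ) (hα : ∀ i, 0 < α i)
    (c : ℝ) (hc : 0 < c) (hWs : Wᵀ = W)
    (hApsd : ((1 : Matrix (Fin n) (Fin n) ℝ) - W).PosSemidef)
    (hcW : ((1 : Matrix (Fin n) (Fin n) ℝ) -
      c • ((Matrix.diagonal fun i => Real.sqrt (α i)) * (1 - W) *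
        Matrix.diagonal fun i => Real.sqrt (α i))).PosDef)
    (hB : IsMoorePenrose (1 - W) B)
    (x z g d dp zp : Matrix (Fin n) (Fin p) ℝ)
    (hd : InRange (1 - W) d)
    (e1 : dp = d + c • ((1 - W) *
      ((2 : ℝ) • x - z - Matrix.diagonal α * g - Matrix.diagonal α * d)))
    (e2 : zp = x - Matrix.diagonal α * g - Matrix.diagonal α * dp)
    (hprox : nsq (Matrix.diagonal fun i => (α i)⁻¹) x ≤
      iprodQ (Matrix.diagonal fun i => (α i)⁻¹) x z)
    (hgrad : nsq (Matrix.diagonal α) g ≤ 2 * iprod g x) :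
    nsq (Matrix.diagonal fun i => (α i)⁻¹) zp + nsq (c⁻¹ • B - Matrix.diagonal α) dp ≤
      nsq (Matrix.diagonal fun i => (α i)⁻¹) z + nsq (c⁻¹ • B - Matrix.diagonal α) d := by
  set A : Matrix (Fin n) (Fin n) ℝ := 1 - W with hA_def
  set L : Matrix (Fin n) (Fin n) ℝ := Matrix.diagonal α with hL_def
  set Li : Matrix (Fin n) (Fin n) ℝ := Matrix.diagonal fun i => (α i)⁻¹ with hLi_def
  set S : Matrix (Fin n) (Fin n) ℝ := Matrix.diagonal fun i => Real.sqrt (α i) with hS_def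
  obtain ⟨w, hw_def⟩ : ∃ w : Matrix (Fin n) (Fin p) ℝ,
      w = (2 : ℝ) • x - z - L * g - L * d := ⟨_, rfl⟩
  rw [← hw_def] at e1
  set Mm : Matrix (Fin n) (Fin n) ℝ := c⁻¹ • B - L with hM_def
  have hAs : Aᵀ = A := by rw [hA_def, Matrix.transpose_sub, Matrix.transpose_one, hWs]
  have hLs : Lᵀ = L := Matrix.diagonal_transpose _
  have hLis : Liᵀ = Li := Matrix.diagonal_transpose _
  have hSs : Sᵀ = S := Matrix.diagonal_transpose _
  have hBs : Bᵀ = B := mp_symm hAs hB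
  have hMs : Mmᵀ = Mm := by
    rw [hM_def, Matrix.transpose_sub, Matrix.transpose_smul, hBs, hLs]
  have hLiL : Li * L = 1 := by
    rw [hLi_def, hL_def, Matrix.diagonal_mul_diagonal]
    rw [show (fun i => (α i)⁻¹ * α i) = fun _ => (1 : ℝ) from
      funext fun i => inv_mul_cancel₀ (hα i).ne', Matrix.diagonal_one]
  -- basic consequences of the update equations
  have hd2 : L * dp = x - L * g - zp := by rw [e2]; abel
  have hdp : dp = Li * (x - zp) - g := by
    have h : Li * (L * dp) = Li * (x - L * g - zp) := by rw [hd2]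
    rw [← Matrix.mul_assoc, hLiL, Matrix.one_mul] at h
    rw [h]
    simp only [Matrix.mul_sub]
    rw [← Matrix.mul_assoc, hLiL, Matrix.one_mul]
    abel
  have hdd : dp - d = c • (A * w) := by rw [e1]; abel
  have hstar : w - c • (L * (A * w)) = x + zp - z := by
    rw [e2, e1, hw_def]
    simp only [Matrix.mul_add, Matrix.mul_sub, Matrix.mul_smul]
    module
  have hdpd : dp + d = (2 : ℝ) • (Li * (x - zp)) - (2 : ℝ) • g - c • (A * w) := by
    have h2 : d = dp - c • (A * w) := by rw [← hdd]; abel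
    rw [h2, hdp]
    module
  -- the d-part of the energy difference
  have key1 : nsq Mm dp - nsq Mm d =
      iprod (dp + d) w - c * iprod (dp + d) (L * (A * w)) := by
    rw [nsq_eq, nsq_eq, qdiff hMs, hdd]
    have hMx : Mm * (c • (A * w)) = B * (A * w) - c • (L * (A * w)) := by
      rw [hM_def, Matrix.sub_mul, Matrix.smul_mul, Matrix.mul_smul, smul_smul,
        inv_mul_cancel₀ hc.ne', one_smul, Matrix.mul_smul]
    rw [hMx, ip_sub_right, ip_smul_right]
    have hrange : iprod (dp + d) (B * (A * w)) = iprod (dp + d) w := by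
      obtain ⟨yd, hyd⟩ := hd
      have hys : dp + d = A * ((2 : ℝ) • yd + c • w) := by
        rw [e1, hyd]
        simp only [Matrix.mul_add, Matrix.mul_smul]
        module
      rw [hys, ip_mul_left, ip_mul_left, hAs]
      congr 1
      calc A * (B * (A * w)) = ((A * B) * A) * w := by simp only [Matrix.mul_assoc]
      _ = A * w := by rw [hB.1]
    rw [hrange]
  have key2 : iprod (dp + d) w - c * iprod (dp + d) (L * (A * w)) =
      iprod (dp + d) (x + zp - z) := by
    conv_rhs => rw [← hstar, ip_sub_right, ip_smul_right]
  have key3 : iprod (dp + d) (x + zp - z) =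
      2 * iprod (x - zp) (Li * (x + zp - z)) - 2 * iprod g (x + zp - z)
        - c * iprod (A * w) (x + zp - z) := by
    rw [hdpd, ip_sub_left, ip_sub_left, ip_smul_left, ip_smul_left, ip_smul_left,
      ip_mul_left, hLis]
  have key4 : iprod (A * w) (x + zp - z) =
      iprod (A * w) w - c * iprod (A * w) (L * (A * w)) := by
    conv_lhs => rw [← hstar, ip_sub_right, ip_smul_right]
  have keyX : iprod g (x + zp - z) = iprod g x + iprod g (zp - z) := by
    rw [add_sub_assoc, ip_add_right]
  -- claim E
  have keyE : nsq Li zp - nsq Li z + 2 * iprod (x - zp) (Li * (x + zp - z))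
      = -(nsq Li (zp - z)) + 2 * iprod x (Li * (x - z)) := by
    simp only [nsq_eq, Matrix.mul_sub, Matrix.mul_add, ip_sub_left, ip_sub_right,
      ip_add_left, ip_add_right]
    have h1 := ipq_comm hLis x z
    have h2 := ipq_comm hLis x zp
    have h3 := ipq_comm hLis zp z
    linarith
  -- claim F
  have hLiLg : Li * (L * g) = g := by rw [← Matrix.mul_assoc, hLiL, Matrix.one_mul]
  have keyF : -(nsq Li (zp - z)) - 2 * iprod g (zp - z)
      = -(nsq Li (zp - z + L * g)) + iprod g (L * g) := by
    simp only [nsq_eq, Matrix.mul_add, Matrix.mul_sub, ip_add_left, ip_add_right,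
      ip_sub_left, ip_sub_right, hLiLg]
    have h1 : iprod (L * g) (Li * zp) = iprod zp g := by
      rw [ipq_comm hLis, hLiLg]
    have h2 : iprod (L * g) (Li * z) = iprod z g := by
      rw [ipq_comm hLis, hLiLg]
    have h3 := ip_comm (L * g) g
    have h4 := ip_comm zp g
    have h5 := ip_comm z g
    linarith
  -- the PSD step
  have keyS : 0 ≤ iprod (A * w) w - c * iprod (A * w) (L * (A * w)) := by
    set Si : Matrix (Fin n) (Fin n) ℝ := Matrix.diagonal fun i => (Real.sqrt (α i))⁻¹
      with hSi_def
    have hSSi : S * Si = 1 := by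
      rw [hS_def, hSi_def, Matrix.diagonal_mul_diagonal]
      rw [show (fun i => Real.sqrt (α i) * (Real.sqrt (α i))⁻¹) = fun _ => (1 : ℝ) from
        funext fun i => mul_inv_cancel₀ (Real.sqrt_pos.mpr (hα i)).ne', Matrix.diagonal_one]
    have hq : w = S * (Si * w) := by rw [← Matrix.mul_assoc, hSSi, Matrix.one_mul]
    set R : Matrix (Fin n) (Fin n) ℝ := S * A * S with hR_def
    have hRpsd : R.PosSemidef := by
      have h := hApsd.mul_mul_conjTranspose_same S
      rwa [Matrix.conjTranspose_eq_transpose_of_trivial, hSs] at h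
    have hL_SS : L = S * S := by
      have hself : (fun i => Real.sqrt (α i) * Real.sqrt (α i)) = α :=
        funext fun i => Real.mul_self_sqrt (hα i).le
      rw [hL_def, hS_def, Matrix.diagonal_mul_diagonal, hself]
    have hip1 : iprod (A * w) w = iprod (Si * w) (R * (Si * w)) := by
      conv_lhs => rw [hq]
      rw [show A * (S * (Si * w)) = (A * S) * (Si * w) from by rw [Matrix.mul_assoc],
        ip_mul_left]
      congr 1
      rw [Matrix.transpose_mul, hAs, hSs, hR_def]
      simp only [Matrix.mul_assoc]
    have hip2 : iprod (A * w) (L * (A * w)) =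
        iprod (Si * w) (R * R * (Si * w)) := by
      conv_lhs => rw [hq]
      rw [hL_SS]
      rw [show A * (S * (Si * w)) = (A * S) * (Si * w) from by rw [Matrix.mul_assoc],
        ip_mul_left]
      congr 1
      rw [Matrix.transpose_mul, hAs, hSs, hR_def]
      simp only [Matrix.mul_assoc]
    obtain ⟨sq, hsqH, hss⟩ : ∃ sq : Matrix (Fin n) (Fin n) ℝ, sqᴴ = sq ∧ sq * sq = R :=
      open scoped MatrixOrder in
      ⟨CFC.sqrt R, (CFC.sqrt_nonneg R).posSemidef.1, CFC.sqrt_mul_sqrt_self R hRpsd.nonneg⟩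
    have hsqpsd : ∀ C : Matrix (Fin n) (Fin n) ℝ, C.PosSemidef → (sq * C * sq).PosSemidef := by
      intro C hC
      have h2 := hC.mul_mul_conjTranspose_same sq
      rwa [hsqH] at h2
    have hpsd2 : (R - c • (R * R)).PosSemidef := by
      have h1 : ((1 : Matrix (Fin n) (Fin n) ℝ) - c • R).PosSemidef := hcW.posSemidef
      have h2 := hsqpsd _ h1
      have hsq2 : sq * R * sq = R * R := by
        rw [← hss]; simp only [Matrix.mul_assoc]
      have h4 : sq * ((1 : Matrix (Fin n) (Fin n) ℝ) - c • R) * sq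
          = R - c • (R * R) := by
        rw [Matrix.mul_sub, Matrix.mul_one, Matrix.mul_smul, Matrix.sub_mul,
          Matrix.smul_mul, hss, hsq2]
      rwa [h4] at h2
    have h := nsq_nonneg hpsd2 (Si * w)
    rw [nsq_eq, Matrix.sub_mul, Matrix.smul_mul, ip_sub_right, ip_smul_right] at h
    rw [hip1, hip2]
    linarith
  -- the prox and gradient inequalities
  have keyP : iprod x (Li * (x - z)) ≤ 0 := by
    rw [nsq_eq, iprodQ_eq] at hprox
    rw [Matrix.mul_sub, ip_sub_right]
    linarith
  have keyG : iprod g (L * g) ≤ 2 * iprod g x := by rw [← nsq_eq]; exact hgrad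
  have keyN : 0 ≤ nsq Li (zp - z + L * g) :=
    nsq_nonneg (Matrix.posSemidef_diagonal_iff.mpr fun i => inv_nonneg.mpr (hα i).le) _
  have keyC : 0 ≤ c * (iprod (A * w) w - c * iprod (A * w) (L * (A * w))) :=
    mul_nonneg hc.le keyS
  -- final assembly
  have hDd : nsq Mm dp - nsq Mm d =
      2 * iprod (x - zp) (Li * (x + zp - z)) - 2 * (iprod g x + iprod g (zp - z))
        - c * (iprod (A * w) w - c * iprod (A * w) (L * (A * w))) := by
    rw [key1, key2, key3, key4, keyX]
  linarith [keyE, keyF, hDd, keyP, keyG, keyN, keyC]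

lemma nsq_neg {Q : Matrix (Fin n) (Fin n) ℝ} (v : Matrix (Fin n) (Fin p) ℝ) :
    nsq Q (-v) = nsq Q v := by
  rw [show -v = (-1 : ℝ) • v from (neg_one_smul ℝ v).symm, nsq_eq, Matrix.mul_smul,
    ip_smul_left, ip_smul_right, ← nsq_eq]
  ring

lemma nsq_combo {Q : Matrix (Fin n) (Fin n) ℝ} (t : ℝ) (u v : Matrix (Fin n) (Fin p) ℝ) :
    nsq Q ((1 - t) • u + t • v)
      = (1 - t) * nsq Q u + t * nsq Q v - t * (1 - t) * nsq Q (v - u) := by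
  simp only [nsq_eq, Matrix.mul_add, Matrix.mul_sub, Matrix.mul_smul, ip_add_left,
    ip_add_right, ip_sub_left, ip_sub_right, ip_smul_left, ip_smul_right]
  ring

lemma rsum_combo {r : Fin n → (Fin p → ℝ) → ℝ} (hr : ∀ i, ConvexOn ℝ Set.univ (r i))
    (t : ℝ) (ht0 : 0 ≤ t) (ht1 : t ≤ 1) (a b : Matrix (Fin n) (Fin p) ℝ) :
    rsum r ((1 - t) • a + t • b) ≤ (1 - t) * rsum r a + t * rsum r b := by
  unfold rsum
  rw [Finset.mul_sum, Finset.mul_sum, ← Finset.sum_add_distrib]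
  refine Finset.sum_le_sum fun i _ => ?_
  have hrow : ((1 - t) • a + t • b) i = (1 - t) • (a i) + t • (b i) := by
    funext j
    simp [Matrix.add_apply]
  rw [hrow]
  exact (hr i).2 (Set.mem_univ _) (Set.mem_univ _) (by linarith) ht0 (by ring)

lemma strong_opt {r : Fin n → (Fin p → ℝ) → ℝ} {α : Fin n → ℝ}
    (hr : ∀ i, ConvexOn ℝ Set.univ (r i)) (hα : ∀ i, 0 < α i)
    {z x : Matrix (Fin n) (Fin p) ℝ} (hmin : ProxMin r α z x)
    (u : Matrix (Fin n) (Fin p) ℝ) :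
    rsum r x + 1 / 2 * nsq (Matrix.diagonal fun i => (α i)⁻¹) (x - z)
        + 1 / 2 * nsq (Matrix.diagonal fun i => (α i)⁻¹) (u - x)
      ≤ rsum r u + 1 / 2 * nsq (Matrix.diagonal fun i => (α i)⁻¹) (u - z) := by
  set Li : Matrix (Fin n) (Fin n) ℝ := Matrix.diagonal fun i => (α i)⁻¹ with hLidef
  have hLipsd : Li.PosSemidef :=
    Matrix.posSemidef_diagonal_iff.mpr fun i => inv_nonneg.mpr (hα i).le
  have hN : 0 ≤ nsq Li (u - x) := nsq_nonneg hLipsd _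
  refine le_of_forall_pos_le_add fun ε hε => ?_
  set N := nsq Li (u - x) with hNdef
  set t : ℝ := min 1 (ε / (N + 1)) with htdef
  have ht0 : 0 < t := lt_min one_pos (div_pos hε (by linarith))
  have ht1 : t ≤ 1 := min_le_left _ _
  have htN : t * N ≤ ε := by
    calc t * N ≤ ε / (N + 1) * N := mul_le_mul_of_nonneg_right (min_le_right _ _) hN
    _ ≤ ε := by
        rw [div_mul_eq_mul_div, div_le_iff₀ (by linarith : (0 : ℝ) < N + 1)]
        nlinarith
  have hcomb := hmin ((1 - t) • x + t • u)
  have harg : (1 - t) • x + t • u - z = (1 - t) • (x - z) + t • (u - z) := by module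
  have harg2 : (u - z) - (x - z) = u - x := by abel
  rw [harg, nsq_combo, harg2] at hcomb
  have hrs := rsum_combo hr t ht0.le ht1 x u
  have hstep : t * (rsum r x + 1 / 2 * nsq Li (x - z) + (1 - t) / 2 * N)
      ≤ t * (rsum r u + 1 / 2 * nsq Li (u - z)) := by nlinarith [hcomb, hrs]
  have hdiv := (mul_le_mul_iff_right₀ ht0).mp hstep
  nlinarith [hdiv, htN]

lemma prox_mono {r : Fin n → (Fin p → ℝ) → ℝ} {α : Fin n → ℝ}
    (hr : ∀ i, ConvexOn ℝ Set.univ (r i)) (hα : ∀ i, 0 < α i)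
    {z z' x x' : Matrix (Fin n) (Fin p) ℝ}
    (h1 : ProxMin r α z x) (h2 : ProxMin r α z' x') :
    nsq (Matrix.diagonal fun i => (α i)⁻¹) (x - x')
      ≤ iprodQ (Matrix.diagonal fun i => (α i)⁻¹) (x - x') (z - z') := by
  have s1 := strong_opt hr hα h1 x'
  have s2 := strong_opt hr hα h2 x
  have hneg : nsq (Matrix.diagonal fun i => (α i)⁻¹) (x' - x)
      = nsq (Matrix.diagonal fun i => (α i)⁻¹) (x - x') := by
    rw [show x' - x = -(x - x') from by abel, nsq_neg]
  rw [hneg] at s1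
  have hLis : (Matrix.diagonal fun i => (α i)⁻¹)ᵀ = Matrix.diagonal fun i => (α i)⁻¹ :=
    Matrix.diagonal_transpose _
  have hexp : 1 / 2 * nsq (Matrix.diagonal fun i => (α i)⁻¹) (x' - z)
        + 1 / 2 * nsq (Matrix.diagonal fun i => (α i)⁻¹) (x - z')
        - 1 / 2 * nsq (Matrix.diagonal fun i => (α i)⁻¹) (x - z)
        - 1 / 2 * nsq (Matrix.diagonal fun i => (α i)⁻¹) (x' - z')
      = iprodQ (Matrix.diagonal fun i => (α i)⁻¹) (x - x') (z - z') := by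
    simp only [nsq_eq, iprodQ_eq, Matrix.mul_sub, ip_sub_left, ip_sub_right]
    have c1 := ipq_comm hLis x z
    have c2 := ipq_comm hLis x z'
    have c3 := ipq_comm hLis x' z
    have c4 := ipq_comm hLis x' z'
    linarith
  linarith [s1, s2, hexp]

lemma iprod_eq_sum (a b : Matrix (Fin n) (Fin p) ℝ) :
    iprod a b = ∑ i, ∑ j, a i j * b i j := by
  unfold iprod
  simp only [Matrix.trace, Matrix.diag, Matrix.mul_apply, Matrix.transpose_apply]
  exact Finset.sum_comm

lemma iprodQ_diag_sum (cv : Fin n → ℝ) (a b : Matrix (Fin n) (Fin p) ℝ) :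
    iprodQ (Matrix.diagonal cv) a b = ∑ i, cv i * ∑ j, a i j * b i j := by
  unfold iprodQ
  simp only [Matrix.trace, Matrix.diag, Matrix.mul_apply, Matrix.mul_diagonal,
    Matrix.transpose_apply]
  rw [Finset.sum_comm]
  refine Finset.sum_congr rfl fun i _ => ?_
  rw [Finset.mul_sum]
  refine Finset.sum_congr rfl fun j _ => ?_
  have hsum : (∑ x, a x j * Matrix.diagonal cv x i) = a i j * cv i := by
    simp [Matrix.diagonal_apply, mul_ite, mul_zero]
  rw [hsum]
  ring

end NIDSAux

section BH
variable {E : Type*} [NormedAddCommGroup E] [InnerProductSpace ℝ E] [CompleteSpace E]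

local notation "⟪" x ", " y "⟫" => @inner ℝ _ _ x y

lemma line_hasDerivAt (f : E → ℝ) (g : E → E) (hg : ∀ u, HasGradientAt f (g u) u)
    (v y : E) (t : ℝ) :
    HasDerivAt (fun t : ℝ => f (v + t • y)) ⟪g (v + t • y), y⟫ t := by
  have hc : HasDerivAt (fun t : ℝ => v + t • y) y t := by
    simpa using ((hasDerivAt_id t).smul_const y).const_add v
  have hf := (hg (v + t • y)).hasFDerivAt
  have h := hf.comp_hasDerivAt t hc
  simpa [InnerProductSpace.toDual_apply_apply, Function.comp_def] using h

lemma convex_tangent_le (f : E → ℝ) (g : E → E) (hf : ConvexOn ℝ Set.univ f)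
    (hg : ∀ u, HasGradientAt f (g u) u) (v y : E) :
    f v + ⟪g v, y - v⟫ ≤ f y := by
  have hφ : ConvexOn ℝ Set.univ (fun t : ℝ => f (v + t • (y - v))) := by
    have h := hf.comp_affineMap (AffineMap.lineMap v y : ℝ →ᵃ[ℝ] E)
    have he : (fun t : ℝ => f (v + t • (y - v)))
        = f ∘ (AffineMap.lineMap v y : ℝ →ᵃ[ℝ] E) := by
      funext t
      simp [AffineMap.lineMap_apply, add_comm]
    rw [he]
    simpa using h
  have hd : HasDerivAt (fun t : ℝ => f (v + t • (y - v))) ⟪g v, y - v⟫ 0 := by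
    have h := line_hasDerivAt f g hg v (y - v) 0
    simpa using h
  have hs := hφ.le_slope_of_hasDerivAt (Set.mem_univ (0 : ℝ)) (Set.mem_univ (1 : ℝ)) one_pos hd
  rw [slope_def_field] at hs
  simp at hs
  linarith

lemma descent_lemma (f : E → ℝ) (g : E → E) (hg : ∀ u, HasGradientAt f (g u) u)
    (Lc : ℝ) (hlip : ∀ u u', ‖g u - g u'‖ ≤ Lc * ‖u - u'‖) (v y : E) :
    f y ≤ f v + ⟪g v, y - v⟫ + Lc / 2 * ‖y - v‖ ^ 2 := by
  set ψ : ℝ → ℝ := fun t =>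
    f (v + t • (y - v)) - t * ⟪g v, y - v⟫ - t ^ 2 * (Lc / 2) * ‖y - v‖ ^ 2 with hψ
  have hψd : ∀ t : ℝ, HasDerivAt ψ
      (⟪g (v + t • (y - v)), y - v⟫ - ⟪g v, y - v⟫ - t * Lc * ‖y - v‖ ^ 2) t := by
    intro t
    have h1 := line_hasDerivAt f g hg v (y - v) t
    have h2 : HasDerivAt (fun t : ℝ => t * ⟪g v, y - v⟫) ⟪g v, y - v⟫ t := by
      simpa using (hasDerivAt_id t).mul_const ⟪g v, y - v⟫
    have h3 : HasDerivAt (fun t : ℝ => t ^ 2 * (Lc / 2) * ‖y - v‖ ^ 2)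
        (t * Lc * ‖y - v‖ ^ 2) t := by
      have h := ((hasDerivAt_pow 2 t).mul_const (Lc / 2)).mul_const (‖y - v‖ ^ 2)
      refine h.congr_deriv ?_
      push_cast
      ring
    exact (h1.sub h2).sub h3
  have hmono : AntitoneOn ψ (Set.Icc (0 : ℝ) 1) := by
    apply antitoneOn_of_deriv_nonpos (convex_Icc 0 1)
    · exact (Differentiable.continuous fun t => (hψd t).differentiableAt).continuousOn
    · exact fun t _ => (hψd t).differentiableAt.differentiableWithinAt
    · intro t ht
      rw [interior_Icc, Set.mem_Ioo] at ht
      rw [(hψd t).deriv]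
      have hcs : ⟪g (v + t • (y - v)) - g v, y - v⟫
          ≤ ‖g (v + t • (y - v)) - g v‖ * ‖y - v‖ := real_inner_le_norm _ _
      have hlip2 : ‖g (v + t • (y - v)) - g v‖ ≤ Lc * (t * ‖y - v‖) := by
        have h := hlip (v + t • (y - v)) v
        rw [add_sub_cancel_left, norm_smul, Real.norm_eq_abs, abs_of_pos ht.1] at h
        exact h
      have hsplit : ⟪g (v + t • (y - v)) - g v, y - v⟫
          = ⟪g (v + t • (y - v)), y - v⟫ - ⟪g v, y - v⟫ := inner_sub_left _ _ _
      have hnn : (0 : ℝ) ≤ ‖y - v‖ := norm_nonneg _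
      nlinarith [mul_le_mul_of_nonneg_right hlip2 hnn]
  have h01 := hmono (Set.left_mem_Icc.mpr zero_le_one) (Set.right_mem_Icc.mpr zero_le_one)
    zero_le_one
  simp only [hψ, one_smul, one_pow, zero_smul, zero_pow, zero_mul, one_mul, add_zero,
    add_sub_cancel, sub_zero, mul_zero] at h01
  linarith

lemma half_coco (f : E → ℝ) (g : E → E) (hf : ConvexOn ℝ Set.univ f)
    (hg : ∀ u, HasGradientAt f (g u) u)
    (Lc : ℝ) (hL : 0 < Lc) (hlip : ∀ u u', ‖g u - g u'‖ ≤ Lc * ‖u - u'‖) (v w : E) :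
    f v - ⟪g v, v⟫ + 1 / (2 * Lc) * ‖g w - g v‖ ^ 2 ≤ f w - ⟪g v, w⟫ := by
  set h : E → ℝ := fun u => f u - ⟪g v, u⟫ with hh
  set gh : E → E := fun u => g u - g v with hgh'
  have hgh : ∀ u, HasGradientAt h (gh u) u := by
    intro u
    have h1 : HasFDerivAt f (InnerProductSpace.toDual ℝ E (g u)) u := (hg u).hasFDerivAt
    have h2 : HasFDerivAt (fun u : E => ⟪g v, u⟫) (InnerProductSpace.toDual ℝ E (g v)) u :=
      (InnerProductSpace.toDual ℝ E (g v)).hasFDerivAt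
    have h3 := h1.sub h2
    rw [hasGradientAt_iff_hasFDerivAt, hgh', map_sub]
    exact h3
  have hlip2 : ∀ u u', ‖gh u - gh u'‖ ≤ Lc * ‖u - u'‖ := by
    intro u u'
    simpa [hgh', sub_sub_sub_cancel_right] using hlip u u'
  have hmin : ∀ u, h v ≤ h u := by
    intro u
    have ht := convex_tangent_le f g hf hg v u
    rw [inner_sub_right] at ht
    simp only [hh]
    linarith
  have hdes := descent_lemma h gh hgh Lc hlip2 w (w - Lc⁻¹ • (g w - g v))
  have harg : w - Lc⁻¹ • (g w - g v) - w = -(Lc⁻¹ • (g w - g v)) := by abel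
  rw [harg] at hdes
  have e1 : ⟪gh w, -(Lc⁻¹ • (g w - g v))⟫ = -(Lc⁻¹ * ‖g w - g v‖ ^ 2) := by
    rw [inner_neg_right, real_inner_smul_right]
    have : ⟪gh w, g w - g v⟫ = ‖g w - g v‖ ^ 2 := by
      rw [hgh']
      exact real_inner_self_eq_norm_sq _
    rw [this]
  have e2 : ‖-(Lc⁻¹ • (g w - g v))‖ ^ 2 = (Lc⁻¹) ^ 2 * ‖g w - g v‖ ^ 2 := by
    rw [norm_neg, norm_smul, Real.norm_eq_abs, abs_of_pos (inv_pos.mpr hL), mul_pow]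
  rw [e1, e2] at hdes
  have hm := hmin (w - Lc⁻¹ • (g w - g v))
  have hfield : Lc / 2 * ((Lc⁻¹) ^ 2 * ‖g w - g v‖ ^ 2)
      = 1 / (2 * Lc) * ‖g w - g v‖ ^ 2 := by
    field_simp
  rw [hfield] at hdes
  have hexp : h w = f w - ⟪g v, w⟫ := rfl
  have hexp2 : h v = f v - ⟪g v, v⟫ := rfl
  rw [hexp] at hdes
  rw [hexp2] at hm
  have hconv : Lc⁻¹ * ‖g w - g v‖ ^ 2 = 2 * (1 / (2 * Lc) * ‖g w - g v‖ ^ 2) := by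
    field_simp
  linarith [hm.trans hdes]

lemma coco (f : E → ℝ) (g : E → E) (hf : ConvexOn ℝ Set.univ f)
    (hg : ∀ u, HasGradientAt f (g u) u)
    (Lc : ℝ) (hL : 0 < Lc) (hlip : ∀ u u', ‖g u - g u'‖ ≤ Lc * ‖u - u'‖) (v w : E) :
    ‖g v - g w‖ ^ 2 ≤ Lc * ⟪g v - g w, v - w⟫ := by
  have h1 := half_coco f g hf hg Lc hL hlip v w
  have h2 := half_coco f g hf hg Lc hL hlip w v
  rw [norm_sub_rev] at h2
  have hinner : ⟪g v - g w, v - w⟫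
      = ⟪g v, v⟫ - ⟪g v, w⟫ - ⟪g w, v⟫ + ⟪g w, w⟫ := by
    rw [inner_sub_left, inner_sub_right, inner_sub_right]
    ring
  have hsum : 1 / Lc * ‖g w - g v‖ ^ 2 ≤ ⟪g v - g w, v - w⟫ := by
    rw [hinner]
    have : 1 / Lc * ‖g w - g v‖ ^ 2 = 1 / (2 * Lc) * ‖g w - g v‖ ^ 2
        + 1 / (2 * Lc) * ‖g w - g v‖ ^ 2 := by
      field_simp
      ring
    linarith
  have hrev : ‖g v - g w‖ = ‖g w - g v‖ := norm_sub_rev _ _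
  rw [hrev]
  have := mul_le_mul_of_nonneg_left hsum hL.le
  calc ‖g w - g v‖ ^ 2 = Lc * (1 / Lc * ‖g w - g v‖ ^ 2) := by
        field_simp
  _ ≤ Lc * ⟪g v - g w, v - w⟫ := this

lemma coco_alpha (f : E → ℝ) (g : E → E) (hf : ConvexOn ℝ Set.univ f)
    (hg : ∀ u, HasGradientAt f (g u) u)
    (Lc : ℝ) (hL : 0 < Lc) (hlip : ∀ u u', ‖g u - g u'‖ ≤ Lc * ‖u - u'‖)
    (a : ℝ) (ha : 0 ≤ a) (haL : a * Lc ≤ 2) (v w : E) :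
    a * ⟪g v - g w, g v - g w⟫ ≤ 2 * ⟪g v - g w, v - w⟫ := by
  have h1 := coco f g hf hg Lc hL hlip v w
  have h2 : ⟪g v - g w, g v - g w⟫ = ‖g v - g w‖ ^ 2 := real_inner_self_eq_norm_sq _
  have h3 : 0 ≤ ⟪g v - g w, v - w⟫ := by nlinarith [sq_nonneg ‖g v - g w‖]
  rw [h2]
  nlinarith [mul_le_mul_of_nonneg_left h1 ha, mul_le_mul_of_nonneg_right haL h3]

end BH

section GradIneq
open NIDSAux

lemma grad_ineq {n p : ℕ} (α Lv : Fin n → ℝ) (hα : ∀ i, 0 < α i) (hLv : ∀ i, 0 < Lv i)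
    (hss : ∀ i, α i < 2 / Lv i)
    (s : Fin n → EuclideanSpace ℝ (Fin p) → ℝ)
    (g : Fin n → EuclideanSpace ℝ (Fin p) → EuclideanSpace ℝ (Fin p))
    (hs : ∀ i, ConvexOn ℝ Set.univ (s i))
    (hg : ∀ i v, HasGradientAt (s i) (g i v) v)
    (hlip : ∀ i (v w : EuclideanSpace ℝ (Fin p)), ‖g i v - g i w‖ ≤ Lv i * ‖v - w‖)
    (X X' : Matrix (Fin n) (Fin p) ℝ) :
    nsq (Matrix.diagonal α) (gradS g X - gradS g X')
      ≤ 2 * iprod (gradS g X - gradS g X') (X - X') := by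
  rw [show nsq (Matrix.diagonal α) (gradS g X - gradS g X')
      = iprodQ (Matrix.diagonal α) (gradS g X - gradS g X') (gradS g X - gradS g X') from rfl,
    iprodQ_diag_sum, iprod_eq_sum, Finset.mul_sum]
  refine Finset.sum_le_sum fun i _ => ?_
  set u : EuclideanSpace ℝ (Fin p) := (WithLp.equiv 2 (Fin p → ℝ)).symm (X i) with hu
  set u' : EuclideanSpace ℝ (Fin p) := (WithLp.equiv 2 (Fin p → ℝ)).symm (X' i) with hu'
  have haL : α i * Lv i ≤ 2 := by
    have h := hss i
    rw [lt_div_iff₀ (hLv i)] at h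
    exact h.le
  have key := coco_alpha (s i) (g i) (hs i) (hg i) (Lv i) (hLv i) (hlip i)
    (α i) (hα i).le haL u u'
  simp only [PiLp.inner_apply, RCLike.inner_apply, conj_trivial] at key
  have hrow : ∀ j, (gradS g X - gradS g X') i j = (g i u - g i u') j := by
    intro j
    simp [gradS, Matrix.sub_apply, PiLp.sub_apply, hu, hu']
  have hrow2 : ∀ j, (X - X') i j = (u - u') j := by
    intro j
    simp [Matrix.sub_apply, PiLp.sub_apply, hu, hu']
  calc α i * ∑ j, (gradS g X - gradS g X') i j * (gradS g X - gradS g X') i j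
      = α i * ∑ j, (g i u - g i u') j * (g i u - g i u') j := by
        congr 1
  _ ≤ 2 * ∑ j, (g i u - g i u') j * (u - u') j :=
        key.trans_eq (by congr 1; exact Finset.sum_congr rfl fun j _ => mul_comm _ _)
  _ = 2 * ∑ j, (gradS g X - gradS g X') i j * (X - X') i j := by
        congr 1

end GradIneq

/-- Lemma 3.6: monotonicity of the successive differences. -/
theorem nids_successive_difference_monotone
    {n p : ℕ}
    (W : Matrix (Fin n) (Fin n) ℝ) (hW : IsMixing W)
    (α : Fin n → ℝ) (hα : ∀ i, 0 < α i) (c : ℝ) (hc : 0 < c)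
    (hcW : ((1 : Matrix (Fin n) (Fin n) ℝ) -
      c • ((Matrix.diagonal fun i => Real.sqrt (α i)) * (1 - W) *
        Matrix.diagonal fun i => Real.sqrt (α i))).PosDef)
    (B : Matrix (Fin n) (Fin n) ℝ) (hB : IsMoorePenrose (1 - W) B)
    (L : Fin n → ℝ) (hL : ∀ i, 0 < L i)
    (s : Fin n → EuclideanSpace ℝ (Fin p) → ℝ)
    (g : Fin n → EuclideanSpace ℝ (Fin p) → EuclideanSpace ℝ (Fin p))
    (hs : ∀ i, ConvexOn ℝ Set.univ (s i))
    (hg : ∀ i v, HasGradientAt (s i) (g i v) v)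
    (hlip : ∀ i (v w : EuclideanSpace ℝ (Fin p)), ‖g i v - g i w‖ ≤ L i * ‖v - w‖)
    (r : Fin n → (Fin p → ℝ) → ℝ) (hr : ∀ i, ConvexOn ℝ Set.univ (r i))
    (hss : ∀ i, α i < 2 / L i)
    (x d z : ℕ → Matrix (Fin n) (Fin p) ℝ)
    (hx : ∀ k, ProxMin r α (z k) (x k))
    (hdu : ∀ k, d (k + 1) = d k + c • ((1 - W) *
      ((2 : ℝ) • x k - z k - Matrix.diagonal α * gradS g (x k) - Matrix.diagonal α * d k)))
    (hzu : ∀ k, z (k + 1) =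
      x k - Matrix.diagonal α * gradS g (x k) - Matrix.diagonal α * d (k + 1))
    (hdr : ∀ k, InRange (1 - W) (d k)) :
    ∀ k : ℕ,
      nsq (Matrix.diagonal fun i => (α i)⁻¹) (z (k + 2) - z (k + 1)) +
          nsq (c⁻¹ • B - Matrix.diagonal α) (d (k + 2) - d (k + 1)) ≤
        nsq (Matrix.diagonal fun i => (α i)⁻¹) (z (k + 1) - z k) +
          nsq (c⁻¹ • B - Matrix.diagonal α) (d (k + 1) - d k) := by
  intro k
  obtain ⟨hWs, hnull, hpd, hpsd⟩ := hW
  have hApsd : ((1 : Matrix (Fin n) (Fin n) ℝ) - W).PosSemidef := by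
    have he : (2 : ℝ) • (1 : Matrix (Fin n) (Fin n) ℝ) - (W + 1) = 1 - W := by
      rw [two_smul]; abel
    rwa [he] at hpsd
  refine NIDSAux.core W B α hα c hc hWs hApsd hcW hB
    (x (k + 1) - x k) (z (k + 1) - z k)
    (gradS g (x (k + 1)) - gradS g (x k))
    (d (k + 1) - d k) (d (k + 2) - d (k + 1)) (z (k + 2) - z (k + 1))
    ?_ ?_ ?_ ?_ ?_
  · obtain ⟨y1, hy1⟩ := hdr (k + 1)
    obtain ⟨y2, hy2⟩ := hdr k
    exact ⟨y1 - y2, by rw [hy1, hy2, Matrix.mul_sub]⟩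
  · have h1 : d (k + 2) = d (k + 1) + c • ((1 - W) *
        ((2 : ℝ) • x (k + 1) - z (k + 1) - Matrix.diagonal α * gradS g (x (k + 1))
          - Matrix.diagonal α * d (k + 1))) := hdu (k + 1)
    rw [h1, hdu k]
    simp only [Matrix.mul_add, Matrix.mul_sub, Matrix.mul_smul, smul_add, smul_sub]
    module
  · have h1 : z (k + 2) = x (k + 1) - Matrix.diagonal α * gradS g (x (k + 1))
        - Matrix.diagonal α * d (k + 2) := hzu (k + 1)
    rw [h1, hzu k]
    simp only [Matrix.mul_add, Matrix.mul_sub, Matrix.mul_smul, smul_add, smul_sub]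
    module
  · exact NIDSAux.prox_mono hr hα (hx (k + 1)) (hx k)
  · exact grad_ineq α L hα hL hss s g hs hg hlip (x (k + 1)) (x k)
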